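/- Let C, K, B, N, H be matrix-valued functions as in the structured quadratic-bilinear setting, and let σ ∈ ℂ be such that K(σ) and K(2σ) are invertible. Define V₁ := K(σ)⁻¹B(σ) and W₁ := (K(2σ)⁻¹)ᴴ(C(2σ))ᴴ. Suppose V contains V₁ in its column span, W contains W₁ in its column span, and Wᴴ K(σ) V and Wᴴ K(2σ) V are invertible. Then the reduced second symmetric subsystem transfer function interpolates the full one at (σ,σ): with F₂(s₁,s₂) := (1/2) C(s₁+s₂) K(s₁+s₂)⁻¹ (H(s₁,s₂)(f₁(s₁)⊗f₁(s₂)) + H(s₂,s₁)(f₁(s₂)⊗f₁(s₁)) + N(s₁)(I_m⊗f₁(s₁)) + N(s₂)(I_m⊗f₁(s₂))) where f₁(s)=K(s)⁻¹B(s), one has F̂₂(σ,σ) = F₂(σ,σ), where F̂₂ is built from the projected quantities Ĉ(s)=C(s)V, K̂(s)=WᴴK(s)V, B̂(s)=WᴴB(s), N̂(s)=WᴴN(s)(I_m⊗V), Ĥ(s₁,s₂)=WᴴH(s₁,s₂)(V⊗V). -/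

import Mathlib

open Matrix Kronecker

theorem stmt_8 {n m p r : ℕ}
    (C : ℂ → Matrix (Fin p) (Fin n) ℂ)
    (K : ℂ → Matrix (Fin n) (Fin n) ℂ)
    (B : ℂ → Matrix (Fin n) (Fin m) ℂ)
    (N : ℂ → Matrix (Fin n) (Fin m × Fin n) ℂ)
    (H : ℂ → ℂ → Matrix (Fin n) (Fin n × Fin n) ℂ)
    (σ : ℂ) (hK : IsUnit (K σ)) (hK2 : IsUnit (K (2 * σ)))
    (V W : Matrix (Fin n) (Fin r) ℂ)
    (V₁ : Matrix (Fin n) (Fin m) ℂ) (hV₁ : V₁ = (K σ)⁻¹ * B σ)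
    (W₁ : Matrix (Fin n) (Fin p) ℂ)
    (hW₁ : W₁ = ((K (2 * σ))⁻¹)ᴴ * (C (2 * σ))ᴴ)
    (hVspan : ∃ X, V * X = V₁) (hWspan : ∃ X, W * X = W₁)
    (hKhat1 : IsUnit (Wᴴ * K σ * V)) (hKhat2 : IsUnit (Wᴴ * K (2 * σ) * V)) :
    -- reduced quantities
    let Khat : ℂ → Matrix (Fin r) (Fin r) ℂ := fun s => Wᴴ * K s * V
    let Bhat : ℂ → Matrix (Fin r) (Fin m) ℂ := fun s => Wᴴ * B s
    let Nhat : ℂ → Matrix (Fin r) (Fin m × Fin r) ℂ :=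
      fun s => Wᴴ * N s * ((1 : Matrix (Fin m) (Fin m) ℂ) ⊗ₖ V)
    let Hhat : ℂ → ℂ → Matrix (Fin r) (Fin r × Fin r) ℂ :=
      fun s₁ s₂ => Wᴴ * H s₁ s₂ * (V ⊗ₖ V)
    let f₁ : ℂ → Matrix (Fin n) (Fin m) ℂ := fun s => (K s)⁻¹ * B s
    let f₁hat : ℂ → Matrix (Fin r) (Fin m) ℂ := fun s => (Khat s)⁻¹ * Bhat s
    -- second symmetric subsystem transfer functions at (σ, σ)
    ((1 : ℂ) / 2) • ((C (2 * σ) * V) * (Khat (2 * σ))⁻¹ *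
        (Hhat σ σ * (f₁hat σ ⊗ₖ f₁hat σ) + Hhat σ σ * (f₁hat σ ⊗ₖ f₁hat σ) +
          Nhat σ * ((1 : Matrix (Fin m) (Fin m) ℂ) ⊗ₖ f₁hat σ) +
          Nhat σ * ((1 : Matrix (Fin m) (Fin m) ℂ) ⊗ₖ f₁hat σ)))
      = ((1 : ℂ) / 2) • (C (2 * σ) * (K (2 * σ))⁻¹ *
        (H σ σ * (f₁ σ ⊗ₖ f₁ σ) + H σ σ * (f₁ σ ⊗ₖ f₁ σ) +
          N σ * ((1 : Matrix (Fin m) (Fin m) ℂ) ⊗ₖ f₁ σ) +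
          N σ * ((1 : Matrix (Fin m) (Fin m) ℂ) ⊗ₖ f₁ σ))) := by

  intro Khat Bhat Nhat Hhat f₁ f₁hat
  obtain ⟨X, hX⟩ : ∃ X : Matrix (Fin r) (Fin m) ℂ, V * X = V₁ := hVspan
  obtain ⟨Y, hY⟩ : ∃ Y : Matrix (Fin r) (Fin p) ℂ, W * Y = W₁ := hWspan
  have hdK : IsUnit (K σ).det := (Matrix.isUnit_iff_isUnit_det _).mp hK
  have hdK2 : IsUnit (K (2 * σ)).det := (Matrix.isUnit_iff_isUnit_det _).mp hK2
  have hd1 : IsUnit (Khat σ).det := (Matrix.isUnit_iff_isUnit_det _).mp hKhat1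
  have hd2 : IsUnit (Khat (2 * σ)).det := (Matrix.isUnit_iff_isUnit_det _).mp hKhat2
  -- V * f₁hat σ = f₁ σ
  have hKV₁ : K σ * V₁ = B σ := by
    rw [hV₁, ← Matrix.mul_assoc, Matrix.mul_nonsing_inv _ hdK, Matrix.one_mul]
  have hXeq : Khat σ * X = Bhat σ := by
    show Wᴴ * K σ * V * X = Wᴴ * B σ
    rw [Matrix.mul_assoc, hX, Matrix.mul_assoc, hKV₁]
  have hf1hat : f₁hat σ = X := by
    show (Khat σ)⁻¹ * Bhat σ = X
    rw [← hXeq, ← Matrix.mul_assoc, Matrix.nonsing_inv_mul _ hd1, Matrix.one_mul]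
  have hVf : V * f₁hat σ = f₁ σ := by
    rw [hf1hat, hX, hV₁]
  -- left projector identity
  have hYW : Yᴴ * Wᴴ = C (2 * σ) * (K (2 * σ))⁻¹ := by
    have := congrArg Matrix.conjTranspose hY
    rw [Matrix.conjTranspose_mul, hW₁, Matrix.conjTranspose_mul,
      Matrix.conjTranspose_conjTranspose, Matrix.conjTranspose_conjTranspose] at this
    exact this
  have hCV : C (2 * σ) * V = Yᴴ * Khat (2 * σ) := by
    show C (2 * σ) * V = Yᴴ * (Wᴴ * K (2 * σ) * V)
    rw [← Matrix.mul_assoc, ← Matrix.mul_assoc, hYW,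
      Matrix.nonsing_inv_mul_cancel_right _ _ hdK2]
  have hL : C (2 * σ) * V * (Khat (2 * σ))⁻¹ * Wᴴ = C (2 * σ) * (K (2 * σ))⁻¹ := by
    rw [hCV, Matrix.mul_nonsing_inv_cancel_right _ _ hd2, hYW]
  -- term identities
  have h1 : Hhat σ σ * (f₁hat σ ⊗ₖ f₁hat σ) = Wᴴ * (H σ σ * (f₁ σ ⊗ₖ f₁ σ)) := by
    show Wᴴ * H σ σ * (V ⊗ₖ V) * (f₁hat σ ⊗ₖ f₁hat σ) = _
    rw [Matrix.mul_assoc (Wᴴ * H σ σ), ← Matrix.mul_kronecker_mul, hVf, Matrix.mul_assoc]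
  have h2 : Nhat σ * ((1 : Matrix (Fin m) (Fin m) ℂ) ⊗ₖ f₁hat σ)
      = Wᴴ * (N σ * ((1 : Matrix (Fin m) (Fin m) ℂ) ⊗ₖ f₁ σ)) := by
    show Wᴴ * N σ * ((1 : Matrix (Fin m) (Fin m) ℂ) ⊗ₖ V) *
        ((1 : Matrix (Fin m) (Fin m) ℂ) ⊗ₖ f₁hat σ) = _
    rw [Matrix.mul_assoc (Wᴴ * N σ), ← Matrix.mul_kronecker_mul, hVf, Matrix.one_mul,
      Matrix.mul_assoc]
  rw [h1, h2, ← Matrix.mul_add, ← Matrix.mul_add, ← Matrix.mul_add,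
    ← Matrix.mul_assoc, hL]
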